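/- arXiv:2008.00561 — 6 statements merged into one kernel-verified Lean document; each statement's English description precedes it below -/
import Mathlib

section
/- Let G be a triangle-free graph containing an induced 5-cycle C = c_1c_2c_3c_4c_5 (indices mod 5), and suppose G has no induced subgraph isomorphic to S_{1,2,2}. Then every vertex of G not on C that has a neighbour in V(C) has either exactly one neighbour on C, or exactly two neighbours on C which are non-consecutive on the cycle. -/
variable {V : Type*}

/-- `S_{1,2,2}`: the 6-vertex tree obtained from the claw `K_{1,3}` by subdividing two
of its edges once each. Centre `0`, pendant vertex `1`, paths `0-2-3` and `0-4-5`. -/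
def S122 : SimpleGraph (Fin 6) :=
  SimpleGraph.fromEdgeSet {s(0,1), s(0,2), s(2,3), s(0,4), s(4,5)}

lemma c5_indep_aux (g : ZMod 5 → Bool) (h1 : ∃ i, g i = true)
    (h2 : ∀ i, ¬(g i = true ∧ g (i + 1) = true)) :
    (∃ i, g i = true ∧ ∀ j, g j = true → j = i) ∨
      (∃ i j : ZMod 5, i ≠ j ∧ j ≠ i + 1 ∧ i ≠ j + 1 ∧
        ∀ k, g k = true ↔ (k = i ∨ k = j)) := by
  revert h1 h2; revert g; decide

/-- In a triangle-free `S_{1,2,2}`-free graph with an induced 5-cycle `c`, every vertex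
outside the cycle with a neighbour on the cycle has either exactly one neighbour on the
cycle, or exactly two non-consecutive neighbours on the cycle. -/
theorem neighbours_on_C5 (G : SimpleGraph V) (htri : G.CliqueFree 3)
    (hS : IsEmpty (S122 ↪g G)) (c : ZMod 5 → V) (hinj : Function.Injective c)
    (hC : ∀ i j, G.Adj (c i) (c j) ↔ (j = i + 1 ∨ i = j + 1)) :
    ∀ v, v ∉ Set.range c → (∃ i, G.Adj v (c i)) →
      (∃! i, G.Adj v (c i)) ∨
      (∃ i j : ZMod 5, i ≠ j ∧ j ≠ i + 1 ∧ i ≠ j + 1 ∧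
        ∀ k, G.Adj v (c k) ↔ (k = i ∨ k = j)) := by
  classical
  intro v hv hex
  set g : ZMod 5 → Bool := fun i => decide (G.Adj v (c i)) with hg
  have hgf : ∀ i, g i = true ↔ G.Adj v (c i) := by
    intro i; simp [hg]
  have h1 : ∃ i, g i = true := by
    obtain ⟨i, hi⟩ := hex; exact ⟨i, (hgf i).2 hi⟩
  have h2 : ∀ i, ¬(g i = true ∧ g (i + 1) = true) := by
    rintro i ⟨ha, hb⟩
    have ha := (hgf i).1 ha
    have hb := (hgf (i + 1)).1 hb
    have hcc : G.Adj (c i) (c (i + 1)) := (hC i (i + 1)).2 (Or.inl rfl)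
    exact htri {v, c i, c (i + 1)}
      (SimpleGraph.is3Clique_triple_iff.2 ⟨ha, hb, hcc⟩)
  rcases c5_indep_aux g h1 h2 with h | ⟨i, j, hij, h2', h3, hk⟩
  · left
    obtain ⟨i, hi, hu⟩ := h
    exact ⟨i, (hgf i).1 hi, fun j hj => hu j ((hgf j).2 hj)⟩
  · right
    exact ⟨i, j, hij, h2', h3, fun k => by rw [← hgf k]; exact hk k⟩
end

section
/- Let G be a connected triangle-free S_{1,2,2}-free graph containing an induced 5-cycle C. Then every vertex of G outside C has at least one neighbour on C. -/
variable {V : Type*}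

private lemma S122_adj_iff (a b : Fin 6) :
    S122.Adj a b ↔ ((s(a,b) = s(0,1) ∨ s(a,b) = s(0,2) ∨ s(a,b) = s(2,3) ∨
      s(a,b) = s(0,4) ∨ s(a,b) = s(4,5)) ∧ a ≠ b) := by
  rw [S122, SimpleGraph.fromEdgeSet_adj]
  simp [Set.mem_insert_iff]

private instance : DecidableRel S122.Adj :=
  fun a b => decidable_of_iff _ (S122_adj_iff a b).symm

private lemma frontier_aux {G : SimpleGraph V} {P : V → Prop} :
    ∀ {a b : V}, G.Walk a b → ¬ P a → P b →
      ∃ u w, G.Adj u w ∧ ¬ P u ∧ P w := by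
  intro a b p
  induction p with
  | nil => exact fun ha hb => absurd hb ha
  | @cons a x b h p ih =>
    intro ha hb
    by_cases hx : P x
    · exact ⟨a, x, h, ha, hx⟩
    · exact ih hx hb

/-- In a connected triangle-free `S_{1,2,2}`-free graph with an induced 5-cycle `c`,
every vertex outside the cycle has a neighbour on the cycle. -/
theorem every_vertex_has_neighbour_on_C5 (G : SimpleGraph V) (hconn : G.Connected)
    (htri : G.CliqueFree 3) (hS : IsEmpty (S122 ↪g G))
    (c : ZMod 5 → V) (hinj : Function.Injective c)
    (hC : ∀ i j, G.Adj (c i) (c j) ↔ (j = i + 1 ∨ i = j + 1)) :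
    ∀ v, v ∉ Set.range c → ∃ i, G.Adj v (c i) := by
  classical
  intro v hv
  by_contra hno
  push_neg at hno
  have hPc : ∀ j : ZMod 5, ∃ k, G.Adj (c j) (c k) :=
    fun j => ⟨j + 1, (hC j (j+1)).mpr (Or.inl rfl)⟩
  obtain ⟨p⟩ := hconn.preconnected v (c 0)
  obtain ⟨u, w, huw, hu, hw⟩ :=
    frontier_aux (P := fun z => ∃ k, G.Adj z (c k)) p
      (fun ⟨k, hk⟩ => hno k hk) (hPc 0)
  have hu' : ∀ k, ¬ G.Adj u (c k) := fun k hk => hu ⟨k, hk⟩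
  have hune : ∀ k, u ≠ c k := by
    intro k h
    exact hu' (k+1) (h ▸ (hC k (k+1)).mpr (Or.inl rfl))
  have hwne : ∀ k, w ≠ c k := fun k h => hu' k (by rw [← h]; exact huw)
  have huwne : u ≠ w := G.ne_of_adj huw
  obtain ⟨j, hj⟩ := hw
  -- triangle-freeness
  have tri : ∀ a : ZMod 5, G.Adj w (c a) → ¬ G.Adj w (c (a+1)) := by
    intro a h1 h2
    exact htri {w, c a, c (a+1)}
      (SimpleGraph.is3Clique_triple_iff.mpr ⟨h1, h2, (hC a (a+1)).mpr (Or.inl rfl)⟩)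
  obtain ⟨i, hw0, hw3⟩ : ∃ i, G.Adj w (c i) ∧ ¬ G.Adj w (c (i+3)) := by
    by_cases h3 : G.Adj w (c (j+3))
    · refine ⟨j+3, h3, ?_⟩
      have e : j+3+3 = j+1 := (by decide : ∀ x : ZMod 5, x+3+3 = x+1) j
      rw [e]; exact tri j hj
    · exact ⟨j, hj, h3⟩
  have hw1 : ¬ G.Adj w (c (i+1)) := tri i hw0
  have hw4 : ¬ G.Adj w (c (i+4)) := by
    intro h
    refine tri (i+4) h ?_
    rw [(by decide : ∀ x : ZMod 5, x+4+1 = x) i]; exact hw0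
  -- cycle facts
  have a01 : G.Adj (c i) (c (i+1)) := (hC _ _).mpr (Or.inl rfl)
  have a04 : G.Adj (c i) (c (i+4)) :=
    (hC _ _).mpr (Or.inr ((by decide : ∀ x : ZMod 5, x = x+4+1) i))
  have a43 : G.Adj (c (i+4)) (c (i+3)) :=
    (hC _ _).mpr (Or.inr ((by decide : ∀ x : ZMod 5, x+4 = x+3+1) i))
  have n03 : ¬ G.Adj (c i) (c (i+3)) := by
    rw [hC]; exact (by decide : ∀ x : ZMod 5, ¬(x+3 = x+1 ∨ x = x+3+1)) i
  have n14 : ¬ G.Adj (c (i+1)) (c (i+4)) := by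
    rw [hC]; exact (by decide : ∀ x : ZMod 5, ¬(x+4 = x+1+1 ∨ x+1 = x+4+1)) i
  have n13 : ¬ G.Adj (c (i+1)) (c (i+3)) := by
    rw [hC]; exact (by decide : ∀ x : ZMod 5, ¬(x+3 = x+1+1 ∨ x+1 = x+3+1)) i
  -- distinctness of cycle vertices
  have d01 : c i ≠ c (i+1) := fun h => (by decide : ∀ x : ZMod 5, ¬ x = x+1) i (hinj h)
  have d04 : c i ≠ c (i+4) := fun h => (by decide : ∀ x : ZMod 5, ¬ x = x+4) i (hinj h)
  have d03 : c i ≠ c (i+3) := fun h => (by decide : ∀ x : ZMod 5, ¬ x = x+3) i (hinj h)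
  have d14 : c (i+1) ≠ c (i+4) := fun h => (by decide : ∀ x : ZMod 5, ¬ x+1 = x+4) i (hinj h)
  have d13 : c (i+1) ≠ c (i+3) := fun h => (by decide : ∀ x : ZMod 5, ¬ x+1 = x+3) i (hinj h)
  have d43 : c (i+4) ≠ c (i+3) := fun h => (by decide : ∀ x : ZMod 5, ¬ x+4 = x+3) i (hinj h)
  -- build the S122 embedding
  let f : Fin 6 → V := ![c i, c (i+1), w, u, c (i+4), c (i+3)]
  have finj : Function.Injective f := by
    intro a b hab
    fin_cases a <;> fin_cases b <;>
      simp only [Matrix.cons_val_zero, Matrix.cons_val_one, Matrix.head_cons,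
        Matrix.cons_val_two, Matrix.tail_cons, Matrix.cons_val_three, Matrix.cons_val_four,
        Matrix.cons_val', Matrix.cons_val_fin_one, Matrix.empty_val',
        Matrix.head_fin_const] at hab ⊢ <;>
      first
      | rfl
      | exact absurd hab (by
          first
          | exact d01 | exact d04 | exact d03 | exact d14 | exact d13 | exact d43
          | exact d01.symm | exact d04.symm | exact d03.symm | exact d14.symm
          | exact d13.symm | exact d43.symm
          | exact hwne _ | exact (hwne _).symm
          | exact hune _ | exact (hune _).symm
          | exact huwne | exact huwne.symm)
  have hmap : ∀ a b : Fin 6, G.Adj (f a) (f b) ↔ S122.Adj a b := by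
    intro a b
    fin_cases a <;> fin_cases b <;>
      simp only [Matrix.cons_val_zero, Matrix.cons_val_one, Matrix.head_cons,
        Matrix.cons_val_two, Matrix.tail_cons, Matrix.cons_val_three, Matrix.cons_val_four,
        Matrix.cons_val', Matrix.cons_val_fin_one, Matrix.empty_val',
        Matrix.head_fin_const] <;>
      first
      | exact iff_of_true (by
          first
          | exact a01 | exact a01.symm | exact a04 | exact a04.symm
          | exact a43 | exact a43.symm
          | exact hw0 | exact hw0.symm | exact huw | exact huw.symm)
          (by decide)
      | exact iff_of_false (by
          first
          | exact n03 | exact fun h => n03 h.symm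
          | exact n14 | exact fun h => n14 h.symm
          | exact n13 | exact fun h => n13 h.symm
          | exact hw1 | exact fun h => hw1 h.symm
          | exact hw3 | exact fun h => hw3 h.symm
          | exact hw4 | exact fun h => hw4 h.symm
          | exact hu' _ | exact fun h => hu' _ h.symm
          | exact G.irrefl)
          (by decide)
  exact hS.false ⟨⟨f, finj⟩, hmap _ _⟩
end

section
/- In a triangle-free S_{1,2,2}-free graph G with an induced 5-cycle c_1...c_5 (indices mod 5), let V_i be the set of vertices outside the cycle whose unique cycle-neighbour is c_i. Then for each i, V_i is complete to V_{i-1} ∪ V_{i+1} and anti-complete to V_{i-2} ∪ V_{i+2}. -/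
variable {V : Type*}

/-- `V_i`: the vertices outside the 5-cycle `c` whose unique neighbour on the cycle is `c i`. -/
def Vset (G : SimpleGraph V) (c : ZMod 5 → V) (i : ZMod 5) : Set V :=
  {v | v ∉ Set.range c ∧ ∀ j, G.Adj v (c j) ↔ j = i}

/-- `W_i`: the vertices outside the 5-cycle `c` whose neighbours on the cycle are exactly
`c (i-1)` and `c (i+1)`. -/
def Wset (G : SimpleGraph V) (c : ZMod 5 → V) (i : ZMod 5) : Set V :=
  {v | v ∉ Set.range c ∧ ∀ j, G.Adj v (c j) ↔ (j = i - 1 ∨ j = i + 1)}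

lemma vec6_five {α : Type*} (a b c d e f : α) : ![a,b,c,d,e,f] 5 = f := rfl

lemma s122_adj (x y : Fin 6) : S122.Adj x y ↔
    (x,y) ∈ [((0:Fin 6),(1:Fin 6)),(1,0),(0,2),(2,0),(2,3),(3,2),(0,4),(4,0),(4,5),(5,4)] := by
  simp only [S122, SimpleGraph.fromEdgeSet_adj, Set.mem_insert_iff, Set.mem_singleton_iff,
    Sym2.eq, Sym2.rel_iff', Prod.mk.injEq, Prod.swap_prod_mk]
  fin_cases x <;> fin_cases y <;> decide

lemma key (G : SimpleGraph V) (hS : IsEmpty (S122 ↪g G)) (v : Fin 6 → V)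
    (hinj : Function.Injective v)
    (hadj : ∀ x y, G.Adj (v x) (v y) ↔ S122.Adj x y) : False :=
  hS.elim ⟨⟨v, hinj⟩, hadj _ _⟩

lemma aux1 (G : SimpleGraph V) (hS : IsEmpty (S122 ↪g G)) (c : ZMod 5 → V)
    (hinj : Function.Injective c)
    (hC : ∀ i j, G.Adj (c i) (c j) ↔ (j = i + 1 ∨ i = j + 1)) (i : ZMod 5) :
    ∀ a ∈ Vset G c i, ∀ b ∈ Vset G c (i + 1), G.Adj a b := by
  rintro a ⟨ha, haC⟩ b ⟨hb, hbC⟩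
  by_contra hab
  have hC' : ∀ m n : ZMod 5, G.Adj (c (i+m)) (c (i+n)) ↔ (n = m + 1 ∨ m = n + 1) := fun m n => by
    rw [hC, add_assoc, add_right_inj, add_assoc, add_right_inj]
  have hCi : ∀ n : ZMod 5, G.Adj (c i) (c (i+n)) ↔ (n = 1 ∨ 0 = n + 1) := fun n => by
    have := hC' 0 n; rwa [add_zero, zero_add] at this
  have hCi' : ∀ n : ZMod 5, G.Adj (c (i+n)) (c i) ↔ (0 = n + 1 ∨ n = 1) := fun n => by
    have := hC' n 0; rwa [add_zero, zero_add] at this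
  have ha' : ∀ m : ZMod 5, G.Adj a (c (i+m)) ↔ m = 0 := fun m => by
    rw [haC, add_eq_left]
  have ha'' : ∀ m : ZMod 5, G.Adj (c (i+m)) a ↔ m = 0 := fun m => by
    rw [G.adj_comm]; exact ha' m
  have ha0 : G.Adj a (c i) := (haC i).2 rfl
  have ha0' : G.Adj (c i) a := ha0.symm
  have hb' : ∀ m : ZMod 5, G.Adj b (c (i+m)) ↔ m = 1 := fun m => by
    rw [hbC, add_right_inj]
  have hb'' : ∀ m : ZMod 5, G.Adj (c (i+m)) b ↔ m = 1 := fun m => by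
    rw [G.adj_comm]; exact hb' m
  have hb0 : ¬ G.Adj b (c i) := fun h => by
    rw [hbC] at h; exact absurd (left_eq_add.mp h) (by decide)
  have hb0' : ¬ G.Adj (c i) b := fun h => hb0 h.symm
  have hab' : ¬ G.Adj b a := fun h => hab h.symm
  have haa : ¬ G.Adj a a := G.irrefl
  have hbb : ¬ G.Adj b b := G.irrefl
  have hcc : ∀ m n : ZMod 5, c (i+m) = c (i+n) ↔ m = n := fun m n => by
    rw [hinj.eq_iff, add_right_inj]
  have hcci : ∀ m : ZMod 5, c i = c (i+m) ↔ m = 0 := fun m => by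
    rw [hinj.eq_iff, left_eq_add]
  have hcci' : ∀ m : ZMod 5, c (i+m) = c i ↔ m = 0 := fun m => by
    rw [hinj.eq_iff, add_eq_left]
  have hca : ∀ j : ZMod 5, ¬ (c j = a) := fun j h => ha ⟨j, h⟩
  have hac : ∀ j : ZMod 5, ¬ (a = c j) := fun j h => ha ⟨j, h.symm⟩
  have hcb : ∀ j : ZMod 5, ¬ (c j = b) := fun j h => hb ⟨j, h⟩
  have hbc : ∀ j : ZMod 5, ¬ (b = c j) := fun j h => hb ⟨j, h.symm⟩
  have hne : ¬ (a = b) := fun h => hb0 (h ▸ ha0)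
  have hne' : ¬ (b = a) := fun h => hne h.symm
  refine key G hS ![c i, a, c (i+1), b, c (i+4), c (i+3)] ?_ ?_
  · intro x y h
    fin_cases x <;> fin_cases y <;>
      simp [vec6_five, hcc, hcci, hcci', hca, hac, hcb, hbc, hne, hne'] at h ⊢ <;>
      first | rfl | exact h.elim | exact absurd h (by decide)
  · intro x y
    fin_cases x <;> fin_cases y <;> rw [s122_adj] <;>
      simp [vec6_five, hC', hCi, hCi', ha', ha'', ha0, ha0', hb', hb'', hb0, hb0', hab, hab',
        haa, hbb] <;>
      decide

lemma aux3 (G : SimpleGraph V) (hS : IsEmpty (S122 ↪g G)) (c : ZMod 5 → V)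
    (hinj : Function.Injective c)
    (hC : ∀ i j, G.Adj (c i) (c j) ↔ (j = i + 1 ∨ i = j + 1)) (i : ZMod 5) :
    ∀ a ∈ Vset G c i, ∀ b ∈ Vset G c (i + 2), ¬ G.Adj a b := by
  rintro a ⟨ha, haC⟩ b ⟨hb, hbC⟩ hab
  have hC' : ∀ m n : ZMod 5, G.Adj (c (i+m)) (c (i+n)) ↔ (n = m + 1 ∨ m = n + 1) := fun m n => by
    rw [hC, add_assoc, add_right_inj, add_assoc, add_right_inj]
  have hCi : ∀ n : ZMod 5, G.Adj (c i) (c (i+n)) ↔ (n = 1 ∨ 0 = n + 1) := fun n => by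
    have := hC' 0 n; rwa [add_zero, zero_add] at this
  have hCi' : ∀ n : ZMod 5, G.Adj (c (i+n)) (c i) ↔ (0 = n + 1 ∨ n = 1) := fun n => by
    have := hC' n 0; rwa [add_zero, zero_add] at this
  have ha' : ∀ m : ZMod 5, G.Adj a (c (i+m)) ↔ m = 0 := fun m => by
    rw [haC, add_eq_left]
  have ha'' : ∀ m : ZMod 5, G.Adj (c (i+m)) a ↔ m = 0 := fun m => by
    rw [G.adj_comm]; exact ha' m
  have ha0 : G.Adj a (c i) := (haC i).2 rfl
  have ha0' : G.Adj (c i) a := ha0.symm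
  have hb' : ∀ m : ZMod 5, G.Adj b (c (i+m)) ↔ m = 2 := fun m => by
    rw [hbC, add_right_inj]
  have hb'' : ∀ m : ZMod 5, G.Adj (c (i+m)) b ↔ m = 2 := fun m => by
    rw [G.adj_comm]; exact hb' m
  have hb0 : ¬ G.Adj b (c i) := fun h => by
    rw [hbC] at h; exact absurd (left_eq_add.mp h) (by decide)
  have hb0' : ¬ G.Adj (c i) b := fun h => hb0 h.symm
  have hab' : G.Adj b a := hab.symm
  have haa : ¬ G.Adj a a := G.irrefl
  have hbb : ¬ G.Adj b b := G.irrefl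
  have hcc : ∀ m n : ZMod 5, c (i+m) = c (i+n) ↔ m = n := fun m n => by
    rw [hinj.eq_iff, add_right_inj]
  have hcci : ∀ m : ZMod 5, c i = c (i+m) ↔ m = 0 := fun m => by
    rw [hinj.eq_iff, left_eq_add]
  have hcci' : ∀ m : ZMod 5, c (i+m) = c i ↔ m = 0 := fun m => by
    rw [hinj.eq_iff, add_eq_left]
  have hca : ∀ j : ZMod 5, ¬ (c j = a) := fun j h => ha ⟨j, h⟩
  have hac : ∀ j : ZMod 5, ¬ (a = c j) := fun j h => ha ⟨j, h.symm⟩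
  have hcb : ∀ j : ZMod 5, ¬ (c j = b) := fun j h => hb ⟨j, h⟩
  have hbc : ∀ j : ZMod 5, ¬ (b = c j) := fun j h => hb ⟨j, h.symm⟩
  have hne : ¬ (a = b) := fun h => hb0 (h ▸ ha0)
  have hne' : ¬ (b = a) := fun h => hne h.symm
  refine key G hS ![c i, c (i+1), a, b, c (i+4), c (i+3)] ?_ ?_
  · intro x y h
    fin_cases x <;> fin_cases y <;>
      simp [vec6_five, hcc, hcci, hcci', hca, hac, hcb, hbc, hne, hne'] at h ⊢ <;>
      first | rfl | exact h.elim | exact absurd h (by decide)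
  · intro x y
    fin_cases x <;> fin_cases y <;> rw [s122_adj] <;>
      simp [vec6_five, hC', hCi, hCi', ha', ha'', ha0, ha0', hb', hb'', hb0, hb0', hab, hab',
        haa, hbb] <;>
      decide

lemma Vset_neg (G : SimpleGraph V) (c : ZMod 5 → V) (k : ZMod 5) :
    Vset G (fun j => c (-j)) k = Vset G c (-k) := by
  ext v
  simp only [Vset, Set.mem_setOf_eq]
  constructor
  · rintro ⟨h1, h2⟩
    refine ⟨fun ⟨j, hj⟩ => h1 ⟨-j, by simpa using hj⟩, fun j => ?_⟩
    have := h2 (-j)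
    rw [neg_neg] at this
    rw [this, neg_eq_iff_eq_neg]
  · rintro ⟨h1, h2⟩
    refine ⟨fun ⟨j, hj⟩ => h1 ⟨-j, hj⟩, fun j => ?_⟩
    rw [h2 (-j), neg_eq_iff_eq_neg, neg_neg]

/-- `V_i` is complete to `V_{i-1} ∪ V_{i+1}` and anti-complete to `V_{i-2} ∪ V_{i+2}`. -/
theorem Vset_complete_anticomplete (G : SimpleGraph V) (htri : G.CliqueFree 3)
    (hS : IsEmpty (S122 ↪g G)) (c : ZMod 5 → V) (hinj : Function.Injective c)
    (hC : ∀ i j, G.Adj (c i) (c j) ↔ (j = i + 1 ∨ i = j + 1)) :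
    ∀ i : ZMod 5,
      (∀ a ∈ Vset G c i, ∀ b ∈ Vset G c (i + 1), G.Adj a b) ∧
      (∀ a ∈ Vset G c i, ∀ b ∈ Vset G c (i - 1), G.Adj a b) ∧
      (∀ a ∈ Vset G c i, ∀ b ∈ Vset G c (i + 2), ¬ G.Adj a b) ∧
      (∀ a ∈ Vset G c i, ∀ b ∈ Vset G c (i - 2), ¬ G.Adj a b) := by
  intro i
  set c' : ZMod 5 → V := fun j => c (-j) with hc'
  have hinj' : Function.Injective c' := fun x y h => neg_injective (hinj h)
  have hC' : ∀ m n, G.Adj (c' m) (c' n) ↔ (n = m + 1 ∨ m = n + 1) := by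
    intro m n
    rw [hc']
    simp only []
    rw [hC]
    constructor
    · rintro (h | h)
      · exact Or.inr (by linear_combination h)
      · exact Or.inl (by linear_combination h)
    · rintro (h | h)
      · exact Or.inr (by linear_combination h)
      · exact Or.inl (by linear_combination h)
  have hmemi : ∀ a, a ∈ Vset G c i → a ∈ Vset G c' (-i) := by
    intro a haa
    rw [Vset_neg, neg_neg]
    exact haa
  refine ⟨aux1 G hS c hinj hC i, ?_, aux3 G hS c hinj hC i, ?_⟩
  · intro a haa b hbb
    refine aux1 G hS c' hinj' hC' (-i) a (hmemi a haa) b ?_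
    rw [show -i + 1 = -(i - 1) by ring, Vset_neg, neg_neg]
    exact hbb
  · intro a haa b hbb
    refine aux3 G hS c' hinj' hC' (-i) a (hmemi a haa) b ?_
    rw [show -i + 2 = -(i - 2) by ring, Vset_neg, neg_neg]
    exact hbb
end

section
/- In a triangle-free S_{1,2,2}-free graph G with an induced 5-cycle c_1...c_5 (indices mod 5), let W_i be the set of vertices outside the cycle adjacent to exactly c_{i-1} and c_{i+1} among cycle vertices, and V_i the set of vertices outside the cycle adjacent only to c_i. Then W_i is complete to V_i and anti-complete to V_{i-1} ∪ V_{i+1}. -/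
variable {V : Type*}

set_option maxHeartbeats 1000000 in
/-- `W_i` is complete to `V_i` and anti-complete to `V_{i-1} ∪ V_{i+1}`. -/
theorem Wset_complete_Vset (G : SimpleGraph V) (htri : G.CliqueFree 3)
    (hS : IsEmpty (S122 ↪g G)) (c : ZMod 5 → V) (hinj : Function.Injective c)
    (hC : ∀ i j, G.Adj (c i) (c j) ↔ (j = i + 1 ∨ i = j + 1)) :
    ∀ i : ZMod 5,
      (∀ w ∈ Wset G c i, ∀ v ∈ Vset G c i, G.Adj w v) ∧
      (∀ w ∈ Wset G c i, ∀ v ∈ Vset G c (i - 1), ¬ G.Adj w v) ∧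
      (∀ w ∈ Wset G c i, ∀ v ∈ Vset G c (i + 1), ¬ G.Adj w v) := by
  classical
  intro i
  have hsub : i - 1 = i + 4 := by
    rw [sub_eq_add_neg, show (-1 : ZMod 5) = 4 by decide]
  refine ⟨?_, ?_, ?_⟩
  · -- complete to V_i
    intro w hw v hv
    by_contra hwv
    obtain ⟨hwr, hwadj⟩ := hw
    obtain ⟨hvr, hvadj⟩ := hv
    rw [hsub] at hwadj
    have hcanc : ∀ a b : ZMod 5, i + a = i + b ↔ a = b := fun a b => add_right_inj i
    have hCab : ∀ a b : ZMod 5,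
        G.Adj (c (i+a)) (c (i+b)) ↔ (b = a + 1 ∨ a = b + 1) := fun a b => by
      rw [hC, add_assoc, add_assoc, hcanc, hcanc]
    have hwadj' : ∀ a : ZMod 5, G.Adj w (c (i+a)) ↔ (a = 4 ∨ a = 1) := fun a => by
      rw [hwadj, hcanc, hcanc]
    have hwadjL : ∀ a : ZMod 5, G.Adj (c (i+a)) w ↔ (a = 4 ∨ a = 1) := fun a => by
      rw [G.adj_comm]; exact hwadj' a
    have hvadj' : ∀ a : ZMod 5, G.Adj v (c (i+a)) ↔ a = 0 := fun a => by
      rw [hvadj, add_eq_left]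
    have hvadjL : ∀ a : ZMod 5, G.Adj (c (i+a)) v ↔ a = 0 := fun a => by
      rw [G.adj_comm]; exact hvadj' a
    have hvw : ¬ G.Adj v w := fun h => hwv h.symm
    have hwc : ∀ j, w ≠ c j := fun j h => hwr ⟨j, h.symm⟩
    have hcw : ∀ j, c j ≠ w := fun j h => hwr ⟨j, h⟩
    have hvc : ∀ j, v ≠ c j := fun j h => hvr ⟨j, h.symm⟩
    have hcv : ∀ j, c j ≠ v := fun j h => hvr ⟨j, h⟩
    have hwv2 : w ≠ v := fun h => by
      have h1 : G.Adj v (c (i+1)) := h ▸ (hwadj' 1).2 (Or.inr rfl)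
      exact absurd ((hvadj' 1).1 h1) (by decide)
    have hvw2 : v ≠ w := fun h => hwv2 h.symm
    let f : Fin 6 → V := ![c (i+1), w, c (i+2), c (i+3), c (i+0), v]
    have finj : Function.Injective f := by
      intro a b h
      fin_cases a <;> fin_cases b <;>
        first
          | rfl
          | exact absurd h (by
              first
                | exact fun hh => absurd (add_left_cancel (hinj hh)) (by decide)
                | exact hwc _
                | exact hcw _
                | exact hvc _
                | exact hcv _
                | exact hwv2
                | exact hvw2)
    have hmap : ∀ a b : Fin 6, G.Adj (f a) (f b) ↔ S122.Adj a b := by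
      intro a b
      fin_cases a <;> fin_cases b <;>
        first
          | exact iff_of_true ((hCab _ _).2 (by decide)) (by simp [S122])
          | exact iff_of_true ((hwadjL _).2 (by decide)) (by simp [S122])
          | exact iff_of_true ((hwadj' _).2 (by decide)) (by simp [S122])
          | exact iff_of_true ((hvadjL _).2 (by decide)) (by simp [S122])
          | exact iff_of_true ((hvadj' _).2 (by decide)) (by simp [S122])
          | exact iff_of_false (fun h => absurd ((hCab _ _).1 h) (by decide))
              (by simp [S122]; try decide)
          | exact iff_of_false (fun h => absurd ((hwadjL _).1 h) (by decide))
              (by simp [S122]; try decide)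
          | exact iff_of_false (fun h => absurd ((hwadj' _).1 h) (by decide))
              (by simp [S122]; try decide)
          | exact iff_of_false (fun h => absurd ((hvadjL _).1 h) (by decide))
              (by simp [S122]; try decide)
          | exact iff_of_false (fun h => absurd ((hvadj' _).1 h) (by decide))
              (by simp [S122]; try decide)
          | exact iff_of_false hwv (by simp [S122]; try decide)
          | exact iff_of_false hvw (by simp [S122]; try decide)
          | exact iff_of_false G.irrefl (by simp [S122]; try decide)
    exact hS.elim ⟨⟨f, finj⟩, hmap _ _⟩
  · intro w hw v hv hwv
    have h1 : G.Adj w (c (i-1)) := (hw.2 _).2 (Or.inl rfl)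
    have h2 : G.Adj v (c (i-1)) := (hv.2 _).2 rfl
    exact htri _ (SimpleGraph.is3Clique_triple_iff.2 ⟨hwv, h1, h2⟩)
  · intro w hw v hv hwv
    have h1 : G.Adj w (c (i+1)) := (hw.2 _).2 (Or.inr rfl)
    have h2 : G.Adj v (c (i+1)) := (hv.2 _).2 rfl
    exact htri _ (SimpleGraph.is3Clique_triple_iff.2 ⟨hwv, h1, h2⟩)
end

section
/- In a triangle-free S_{1,2,2}-free graph G with an induced 5-cycle c_1...c_5 (indices mod 5), with V_i and W_i defined as the vertices outside the cycle whose cycle-neighbourhood is {c_i} and {c_{i-1},c_{i+1}} respectively, the induced bipartite graphs G[V_i ∪ W_{i+2}], G[V_i ∪ W_{i-2}] and G[W_i ∪ W_{i+1}] are 2P_2-free. -/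
variable {V : Type*}

/-- `2P_2`: the disjoint union of two edges. -/
def twoP2 : SimpleGraph (Fin 4) := SimpleGraph.fromEdgeSet {s(0,1), s(2,3)}

lemma zmod5_add_ne (i : ZMod 5) {k l : ZMod 5} (h : k ≠ l) : i + k ≠ i + l :=
  fun hh => h (add_left_cancel hh)

lemma zmod5_ne_add (i : ZMod 5) {l : ZMod 5} (h : l ≠ 0) : i ≠ i + l :=
  fun hh => h ((add_left_cancel (a := i) (show i + 0 = i + l by rw [add_zero, ← hh])).symm)

set_option maxHeartbeats 8000000 in
lemma buildS122 (G : SimpleGraph V) (hS : IsEmpty (S122 ↪g G))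
    (p q v1 w1 v2 w2 : V)
    (hpq : G.Adj p q) (hpv1 : G.Adj p v1) (hpv2 : G.Adj p v2)
    (hv1w1 : G.Adj v1 w1) (hv2w2 : G.Adj v2 w2)
    (npw1 : ¬ G.Adj p w1) (npw2 : ¬ G.Adj p w2)
    (nqv1 : ¬ G.Adj q v1) (nqw1 : ¬ G.Adj q w1)
    (nqv2 : ¬ G.Adj q v2) (nqw2 : ¬ G.Adj q w2)
    (nv1v2 : ¬ G.Adj v1 v2) (nv1w2 : ¬ G.Adj v1 w2)
    (nw1v2 : ¬ G.Adj w1 v2) (nw1w2 : ¬ G.Adj w1 w2)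
    (epw1 : p ≠ w1) (epw2 : p ≠ w2)
    (eqv1 : q ≠ v1) (eqw1 : q ≠ w1) (eqv2 : q ≠ v2) (eqw2 : q ≠ w2)
    (ev1v2 : v1 ≠ v2) (ev1w2 : v1 ≠ w2) (ew1v2 : w1 ≠ v2) (ew1w2 : w1 ≠ w2) :
    False := by
  have epq := hpq.ne
  have epv1 := hpv1.ne
  have epv2 := hpv2.ne
  have ev1w1 := hv1w1.ne
  have ev2w2 := hv2w2.ne
  refine hS.false ⟨⟨![p, q, v1, w1, v2, w2], ?_⟩, ?_⟩
  · intro a b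
    fin_cases a <;> fin_cases b <;>
      simp_all [Matrix.cons_val_zero, Matrix.cons_val_one] <;>
      first
        | rfl
        | (intro h; first
            | exact epq h | exact epq h.symm
            | exact epv1 h | exact epv1 h.symm
            | exact epv2 h | exact epv2 h.symm
            | exact ev1w1 h | exact ev1w1 h.symm
            | exact ev2w2 h | exact ev2w2 h.symm
            | exact epw1 h | exact epw1 h.symm
            | exact epw2 h | exact epw2 h.symm
            | exact eqv1 h | exact eqv1 h.symm
            | exact eqw1 h | exact eqw1 h.symm
            | exact eqv2 h | exact eqv2 h.symm
            | exact eqw2 h | exact eqw2 h.symm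
            | exact ev1v2 h | exact ev1v2 h.symm
            | exact ev1w2 h | exact ev1w2 h.symm
            | exact ew1v2 h | exact ew1v2 h.symm
            | exact ew1w2 h | exact ew1w2 h.symm)
  · intro a b
    change G.Adj (![p, q, v1, w1, v2, w2] a) (![p, q, v1, w1, v2, w2] b) ↔ S122.Adj a b
    have hqp := hpq.symm
    have hv1p := hpv1.symm
    have hv2p := hpv2.symm
    have hw1v1 := hv1w1.symm
    have hw2v2 := hv2w2.symm
    have nw1p : ¬ G.Adj w1 p := fun h => npw1 h.symm
    have nw2p : ¬ G.Adj w2 p := fun h => npw2 h.symm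
    have nv1q : ¬ G.Adj v1 q := fun h => nqv1 h.symm
    have nw1q : ¬ G.Adj w1 q := fun h => nqw1 h.symm
    have nv2q : ¬ G.Adj v2 q := fun h => nqv2 h.symm
    have nw2q : ¬ G.Adj w2 q := fun h => nqw2 h.symm
    have nv2v1 : ¬ G.Adj v2 v1 := fun h => nv1v2 h.symm
    have nw2v1 : ¬ G.Adj w2 v1 := fun h => nv1w2 h.symm
    have nv2w1 : ¬ G.Adj v2 w1 := fun h => nw1v2 h.symm
    have nw2w1 : ¬ G.Adj w2 w1 := fun h => nw1w2 h.symm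
    have npp := G.loopless.irrefl p
    have nqq := G.loopless.irrefl q
    have nv1v1 := G.loopless.irrefl v1
    have nw1w1 := G.loopless.irrefl w1
    have nv2v2 := G.loopless.irrefl v2
    have nw2w2 := G.loopless.irrefl w2
    have h0 : ![p, q, v1, w1, v2, w2] 5 = w2 := rfl
    fin_cases a <;> fin_cases b <;>
      simp [S122, Sym2.eq_iff, Matrix.cons_val_succ, h0, hpq, hpv1, hpv2, hv1w1, hv2w2, npw1, npw2,
        nqv1, nqw1, nqv2, nqw2, nv1v2, nv1w2, nw1v2, nw1w2,
        hqp, hv1p, hv2p, hw1v1, hw2v2, nw1p, nw2p, nv1q, nw1q, nv2q, nw2q,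
        nv2v1, nw2v1, nv2w1, nw2w1, npp, nqq, nv1v1, nw1w1, nv2v2, nw2w2]

lemma noTwoP2 (G : SimpleGraph V) (hS : IsEmpty (S122 ↪g G)) (A B : Set V) (p q : V)
    (hpq : G.Adj p q)
    (hpA : ∀ v ∈ A, G.Adj p v)
    (hpB : ∀ w ∈ B, ¬ G.Adj p w)
    (hqA : ∀ v ∈ A, ¬ G.Adj q v)
    (hqB : ∀ w ∈ B, ¬ G.Adj q w)
    (hA : ∀ ⦃v v'⦄, v ∈ A → v' ∈ A → ¬ G.Adj v v')
    (hB : ∀ ⦃w w'⦄, w ∈ B → w' ∈ B → ¬ G.Adj w w')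
    (hpB' : ∀ w ∈ B, p ≠ w)
    (hqA' : ∀ v ∈ A, q ≠ v)
    (hqB' : ∀ w ∈ B, q ≠ w) :
    IsEmpty (twoP2 ↪g G.induce (A ∪ B)) := by
  constructor
  intro e
  have key : ∀ a b : Fin 4, G.Adj (e a) (e b) ↔ twoP2.Adj a b := fun a b => by
    have := e.map_rel_iff (a := a) (b := b)
    simpa using this
  have nee : ∀ a b : Fin 4, a ≠ b → (e a : V) ≠ (e b : V) := fun a b hab h =>
    hab (e.injective (Subtype.ext h))
  have a01 : G.Adj (e 0) (e 1) := (key 0 1).mpr (by simp [twoP2, Sym2.eq_iff])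
  have a23 : G.Adj (e 2) (e 3) := (key 2 3).mpr (by simp [twoP2, Sym2.eq_iff])
  have t02 : ¬ twoP2.Adj 0 2 := by simp [twoP2, Sym2.eq_iff]
  have t03 : ¬ twoP2.Adj 0 3 := by simp [twoP2, Sym2.eq_iff]
  have t12 : ¬ twoP2.Adj 1 2 := by simp [twoP2, Sym2.eq_iff]
  have t13 : ¬ twoP2.Adj 1 3 := by simp [twoP2, Sym2.eq_iff]
  have n02 : ¬ G.Adj (e 0) (e 2) := fun h => t02 ((key 0 2).mp h)
  have n03 : ¬ G.Adj (e 0) (e 3) := fun h => t03 ((key 0 3).mp h)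
  have n12 : ¬ G.Adj (e 1) (e 2) := fun h => t12 ((key 1 2).mp h)
  have n13 : ¬ G.Adj (e 1) (e 3) := fun h => t13 ((key 1 3).mp h)
  have sort : ∀ a b : Fin 4, G.Adj (e a) (e b) →
      ((e a : V) ∈ A ∧ (e b : V) ∈ B) ∨ ((e a : V) ∈ B ∧ (e b : V) ∈ A) := by
    intro a b hab
    rcases (e a).2 with ha | ha <;> rcases (e b).2 with hb | hb
    · exact absurd hab (hA ha hb)
    · exact Or.inl ⟨ha, hb⟩
    · exact Or.inr ⟨ha, hb⟩
    · exact absurd hab (hB ha hb)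
  rcases sort 0 1 a01 with ⟨hA0, hB1⟩ | ⟨hB0, hA1⟩ <;>
    rcases sort 2 3 a23 with ⟨hA2, hB3⟩ | ⟨hB2, hA3⟩
  · exact buildS122 G hS p q (e 0) (e 1) (e 2) (e 3)
      hpq (hpA _ hA0) (hpA _ hA2) a01 a23
      (hpB _ hB1) (hpB _ hB3) (hqA _ hA0) (hqB _ hB1) (hqA _ hA2) (hqB _ hB3)
      n02 n03 n12 n13
      (hpB' _ hB1) (hpB' _ hB3) (hqA' _ hA0) (hqB' _ hB1) (hqA' _ hA2) (hqB' _ hB3)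
      (nee 0 2 (by decide)) (nee 0 3 (by decide)) (nee 1 2 (by decide)) (nee 1 3 (by decide))
  · exact buildS122 G hS p q (e 0) (e 1) (e 3) (e 2)
      hpq (hpA _ hA0) (hpA _ hA3) a01 a23.symm
      (hpB _ hB1) (hpB _ hB2) (hqA _ hA0) (hqB _ hB1) (hqA _ hA3) (hqB _ hB2)
      n03 n02 n13 n12
      (hpB' _ hB1) (hpB' _ hB2) (hqA' _ hA0) (hqB' _ hB1) (hqA' _ hA3) (hqB' _ hB2)
      (nee 0 3 (by decide)) (nee 0 2 (by decide)) (nee 1 3 (by decide)) (nee 1 2 (by decide))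
  · exact buildS122 G hS p q (e 1) (e 0) (e 2) (e 3)
      hpq (hpA _ hA1) (hpA _ hA2) a01.symm a23
      (hpB _ hB0) (hpB _ hB3) (hqA _ hA1) (hqB _ hB0) (hqA _ hA2) (hqB _ hB3)
      n12 n13 n02 n03
      (hpB' _ hB0) (hpB' _ hB3) (hqA' _ hA1) (hqB' _ hB0) (hqA' _ hA2) (hqB' _ hB3)
      (nee 1 2 (by decide)) (nee 1 3 (by decide)) (nee 0 2 (by decide)) (nee 0 3 (by decide))
  · exact buildS122 G hS p q (e 1) (e 0) (e 3) (e 2)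
      hpq (hpA _ hA1) (hpA _ hA3) a01.symm a23.symm
      (hpB _ hB0) (hpB _ hB2) (hqA _ hA1) (hqB _ hB0) (hqA _ hA3) (hqB _ hB2)
      n13 n12 n03 n02
      (hpB' _ hB0) (hpB' _ hB2) (hqA' _ hA1) (hqB' _ hB0) (hqA' _ hA3) (hqB' _ hB2)
      (nee 1 3 (by decide)) (nee 1 2 (by decide)) (nee 0 3 (by decide)) (nee 0 2 (by decide))

/-- The induced subgraphs `G[V_i ∪ W_{i+2}]`, `G[V_i ∪ W_{i-2}]` and `G[W_i ∪ W_{i+1}]`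
are `2P_2`-free. -/
theorem induced_2P2_free (G : SimpleGraph V) (htri : G.CliqueFree 3)
    (hS : IsEmpty (S122 ↪g G)) (c : ZMod 5 → V) (hinj : Function.Injective c)
    (hC : ∀ i j, G.Adj (c i) (c j) ↔ (j = i + 1 ∨ i = j + 1)) :
    ∀ i : ZMod 5,
      IsEmpty (twoP2 ↪g G.induce (Vset G c i ∪ Wset G c (i + 2))) ∧
      IsEmpty (twoP2 ↪g G.induce (Vset G c i ∪ Wset G c (i - 2))) ∧
      IsEmpty (twoP2 ↪g G.induce (Wset G c i ∪ Wset G c (i + 1))) := by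
  classical
  have tri : ∀ {x y z : V}, G.Adj x y → G.Adj x z → G.Adj y z → False := by
    intro x y z h1 h2 h3
    exact htri {x, y, z} (SimpleGraph.is3Clique_triple_iff.mpr ⟨h1, h2, h3⟩)
  intro i
  -- arithmetic facts
  have e1 : i + 2 - 1 = i + 1 := by ring
  have e2 : i + 2 + 1 = i + 3 := by ring
  have e3 : i - 2 - 1 = i + 2 := by
    have : (-3 : ZMod 5) = 2 := by decide
    rw [show i - 2 - 1 = i + (-3) by ring, this]
  have e4 : i - 2 + 1 = i + 4 := by
    have : (-1 : ZMod 5) = 4 := by decide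
    rw [show i - 2 + 1 = i + (-1) by ring, this]
  have e5 : i - 1 = i + 4 := by
    have : (-1 : ZMod 5) = 4 := by decide
    rw [sub_eq_add_neg, this]
  have e6 : i + 1 - 1 = i := by ring
  have e7 : i + 1 + 1 = i + 2 := by ring
  -- membership unfolders
  have hVmem : ∀ v ∈ Vset G c i, v ∉ Set.range c ∧ ∀ j, G.Adj v (c j) ↔ j = i :=
    fun v hv => hv
  refine ⟨?_, ?_, ?_⟩
  · -- G[V_i ∪ W_{i+2}], p = c i, q = c (i+4)
    refine noTwoP2 G hS _ _ (c i) (c (i + 4)) ?_ ?_ ?_ ?_ ?_ ?_ ?_ ?_ ?_ ?_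
    · refine (hC i (i + 4)).mpr (Or.inr ?_)
      have h : (4 : ZMod 5) + 1 = 0 := by decide
      rw [add_assoc, h, add_zero]
    · exact fun v hv => ((hv.2 i).mpr rfl).symm
    · intro w hw h
      rcases (hw.2 i).mp h.symm with h' | h'
      · rw [e1] at h'; exact zmod5_ne_add i (by decide) h'
      · rw [e2] at h'; exact zmod5_ne_add i (by decide) h'
    · intro v hv h
      have h' : i + 4 = i := (hv.2 (i + 4)).mp h.symm
      exact zmod5_ne_add i (show (4 : ZMod 5) ≠ 0 by decide) h'.symm
    · intro w hw h
      rcases (hw.2 (i + 4)).mp h.symm with h' | h'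
      · rw [e1] at h'; exact zmod5_add_ne i (show (4:ZMod 5) ≠ 1 by decide) h'
      · rw [e2] at h'; exact zmod5_add_ne i (show (4:ZMod 5) ≠ 3 by decide) h'
    · exact fun v v' hv hv' hadj => tri hadj ((hv.2 i).mpr rfl) ((hv'.2 i).mpr rfl)
    · exact fun w w' hw hw' hadj =>
        tri hadj ((hw.2 (i + 2 - 1)).mpr (Or.inl rfl)) ((hw'.2 (i + 2 - 1)).mpr (Or.inl rfl))
    · exact fun w hw h => hw.1 ⟨_, h⟩
    · exact fun v hv h => hv.1 ⟨_, h⟩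
    · exact fun w hw h => hw.1 ⟨_, h⟩
  · -- G[V_i ∪ W_{i-2}], p = c i, q = c (i+1)
    refine noTwoP2 G hS _ _ (c i) (c (i + 1)) ?_ ?_ ?_ ?_ ?_ ?_ ?_ ?_ ?_ ?_
    · exact (hC i (i + 1)).mpr (Or.inl rfl)
    · exact fun v hv => ((hv.2 i).mpr rfl).symm
    · intro w hw h
      rcases (hw.2 i).mp h.symm with h' | h'
      · rw [e3] at h'; exact zmod5_ne_add i (by decide) h'
      · rw [e4] at h'; exact zmod5_ne_add i (by decide) h'
    · intro v hv h
      have := (hv.2 (i + 1)).mp h.symm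
      exact zmod5_add_ne i (show (1 : ZMod 5) ≠ 0 by decide) (by simpa using this)
    · intro w hw h
      rcases (hw.2 (i + 1)).mp h.symm with h' | h'
      · rw [e3] at h'; exact zmod5_add_ne i (show (1:ZMod 5) ≠ 2 by decide) h'
      · rw [e4] at h'; exact zmod5_add_ne i (show (1:ZMod 5) ≠ 4 by decide) h'
    · exact fun v v' hv hv' hadj => tri hadj ((hv.2 i).mpr rfl) ((hv'.2 i).mpr rfl)
    · exact fun w w' hw hw' hadj =>
        tri hadj ((hw.2 (i - 2 + 1)).mpr (Or.inr rfl)) ((hw'.2 (i - 2 + 1)).mpr (Or.inr rfl))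
    · exact fun w hw h => hw.1 ⟨_, h⟩
    · exact fun v hv h => hv.1 ⟨_, h⟩
    · exact fun w hw h => hw.1 ⟨_, h⟩
  · -- G[W_i ∪ W_{i+1}], p = c (i+4), q = c (i+3)
    refine noTwoP2 G hS _ _ (c (i + 4)) (c (i + 3)) ?_ ?_ ?_ ?_ ?_ ?_ ?_ ?_ ?_ ?_
    · refine (hC (i + 4) (i + 3)).mpr (Or.inr ?_)
      have h : (3 : ZMod 5) + 1 = 4 := by decide
      rw [add_assoc, h]
    · exact fun w hw => ((hw.2 (i + 4)).mpr (Or.inl e5.symm)).symm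
    · intro w hw h
      rcases (hw.2 (i + 4)).mp h.symm with h' | h'
      · rw [e6] at h'; exact zmod5_add_ne i (show (4:ZMod 5) ≠ 0 by decide) (by simpa using h')
      · rw [e7] at h'; exact zmod5_add_ne i (show (4:ZMod 5) ≠ 2 by decide) h'
    · intro w hw h
      rcases (hw.2 (i + 3)).mp h.symm with h' | h'
      · rw [e5] at h'; exact zmod5_add_ne i (show (3:ZMod 5) ≠ 4 by decide) h'
      · exact zmod5_add_ne i (show (3:ZMod 5) ≠ 1 by decide) h'
    · intro w hw h
      rcases (hw.2 (i + 3)).mp h.symm with h' | h'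
      · rw [e6] at h'; exact zmod5_add_ne i (show (3:ZMod 5) ≠ 0 by decide) (by simpa using h')
      · rw [e7] at h'; exact zmod5_add_ne i (show (3:ZMod 5) ≠ 2 by decide) h'
    · exact fun w w' hw hw' hadj =>
        tri hadj ((hw.2 (i+1)).mpr (Or.inr rfl)) ((hw'.2 (i+1)).mpr (Or.inr rfl))
    · exact fun w w' hw hw' hadj =>
        tri hadj ((hw.2 (i + 1 + 1)).mpr (Or.inr rfl)) ((hw'.2 (i + 1 + 1)).mpr (Or.inr rfl))
    · exact fun w hw h => hw.1 ⟨_, h⟩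
    · exact fun w hw h => hw.1 ⟨_, h⟩
    · exact fun w hw h => hw.1 ⟨_, h⟩
end

section
/- In a triangle-free S_{1,2,2}-free graph G with an induced 5-cycle c_1...c_5 (indices mod 5), with V_i and W_i as above, for any vertices v ∈ V_i, w ∈ W_{i+2}, z ∈ W_{i-2}, the set {v,w,z} is not independent. -/
variable {V : Type*}

lemma S122_adj (a b : Fin 6) : S122.Adj a b ↔
    ((a = 0 ∧ b = 1) ∨ (a = 0 ∧ b = 2) ∨ (a = 2 ∧ b = 3) ∨ (a = 0 ∧ b = 4) ∨ (a = 4 ∧ b = 5) ∨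
     (b = 0 ∧ a = 1) ∨ (b = 0 ∧ a = 2) ∨ (b = 2 ∧ a = 3) ∨ (b = 0 ∧ a = 4) ∨ (b = 4 ∧ a = 5)) := by
  rw [S122, SimpleGraph.fromEdgeSet_adj]
  simp only [Set.mem_insert_iff, Set.mem_singleton_iff, Sym2.eq_iff]
  revert a b
  decide

/-- For `v ∈ V_i`, `w ∈ W_{i+2}`, `z ∈ W_{i-2}`, the set `{v, w, z}` is not independent. -/
theorem not_independent_triple (G : SimpleGraph V) (htri : G.CliqueFree 3)
    (hS : IsEmpty (S122 ↪g G)) (c : ZMod 5 → V) (hinj : Function.Injective c)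
    (hC : ∀ i j, G.Adj (c i) (c j) ↔ (j = i + 1 ∨ i = j + 1)) :
    ∀ i : ZMod 5, ∀ v ∈ Vset G c i, ∀ w ∈ Wset G c (i + 2), ∀ z ∈ Wset G c (i - 2),
      ¬ (¬ G.Adj v w ∧ ¬ G.Adj v z ∧ ¬ G.Adj w z) := by
  intro i v hv w hw z hz h
  obtain ⟨hvw, hvz, hwz⟩ := h
  obtain ⟨hvr, hva⟩ := hv
  obtain ⟨hwr, hwa⟩ := hw
  obtain ⟨hzr, hza⟩ := hz
  have hwv : ¬ G.Adj w v := fun h => hvw h.symm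
  have hzv : ¬ G.Adj z v := fun h => hvz h.symm
  have hzw : ¬ G.Adj z w := fun h => hwz h.symm
  have h5 : (5 : ZMod 5) = 0 := by decide
  -- symmetric versions of the adjacency characterisations
  have hvaS : ∀ j, G.Adj (c j) v ↔ j = i := fun j => by rw [G.adj_comm]; exact hva j
  have hwaS : ∀ j, G.Adj (c j) w ↔ (j = i + 2 - 1 ∨ j = i + 2 + 1) := fun j => by
    rw [G.adj_comm]; exact hwa j
  have hzaS : ∀ j, G.Adj (c j) z ↔ (j = i - 2 - 1 ∨ j = i - 2 + 1) := fun j => by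
    rw [G.adj_comm]; exact hza j
  -- non-membership facts
  have hcv : ∀ j, ¬ (c j = v) := fun j h => hvr ⟨j, h⟩
  have hcw : ∀ j, ¬ (c j = w) := fun j h => hwr ⟨j, h⟩
  have hcz : ∀ j, ¬ (c j = z) := fun j h => hzr ⟨j, h⟩
  have hvc : ∀ j, ¬ (v = c j) := fun j h => hcv j h.symm
  have hwc : ∀ j, ¬ (w = c j) := fun j h => hcw j h.symm
  have hzc : ∀ j, ¬ (z = c j) := fun j h => hcz j h.symm
  -- distinctness of v, w, z
  have hvwne : ¬ (v = w) := by
    intro h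
    have h1 : G.Adj w (c (i+1)) := (hwa (i+1)).2 (Or.inl (by ring))
    rw [← h, hva] at h1
    exact absurd (by linear_combination h1 : (1 : ZMod 5) = 0) (by decide)
  have hvzne : ¬ (v = z) := by
    intro h
    have h1 : G.Adj z (c (i+2)) := (hza (i+2)).2 (Or.inl (by linear_combination h5))
    rw [← h, hva] at h1
    exact absurd (by linear_combination h1 : (2 : ZMod 5) = 0) (by decide)
  have hwzne : ¬ (w = z) := by
    intro h
    have h1 : G.Adj z (c (i+2)) := (hza (i+2)).2 (Or.inl (by linear_combination h5))
    rw [← h, hwa] at h1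
    rcases h1 with h1 | h1
    · exact absurd (by linear_combination h1 : (1 : ZMod 5) = 0) (by decide)
    · exact absurd (by linear_combination -h1 : (1 : ZMod 5) = 0) (by decide)
  have hwvne : ¬ (w = v) := fun h => hvwne h.symm
  have hzvne : ¬ (z = v) := fun h => hvzne h.symm
  have hzwne : ¬ (z = w) := fun h => hwzne h.symm
  -- the candidate induced S122
  set f : Fin 6 → V := ![c i, v, c (i+1), w, c (i-1), z] with hf
  have e0 : ∀ h : 0 < 6, f ⟨0, h⟩ = c i := fun _ => rfl
  have e1 : ∀ h : 1 < 6, f ⟨1, h⟩ = v := fun _ => rfl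
  have e2 : ∀ h : 2 < 6, f ⟨2, h⟩ = c (i+1) := fun _ => rfl
  have e3 : ∀ h : 3 < 6, f ⟨3, h⟩ = w := fun _ => rfl
  have e4 : ∀ h : 4 < 6, f ⟨4, h⟩ = c (i-1) := fun _ => rfl
  have e5 : ∀ h : 5 < 6, f ⟨5, h⟩ = z := fun _ => rfl
  have hfinj : Function.Injective f := by
    intro a b
    fin_cases a <;> fin_cases b <;>
      simp only [e0, e1, e2, e3, e4, e5] <;>
      intro hab <;>
      first
      | rfl
      | trivial
      | exact absurd hab (hcv _)
      | exact absurd hab (hcw _)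
      | exact absurd hab (hcz _)
      | exact absurd hab (hvc _)
      | exact absurd hab (hwc _)
      | exact absurd hab (hzc _)
      | exact absurd hab hvwne
      | exact absurd hab hvzne
      | exact absurd hab hwzne
      | exact absurd hab hwvne
      | exact absurd hab hzvne
      | exact absurd hab hzwne
      | (exact absurd (by linear_combination hinj hab : (1 : ZMod 5) = 0) (by decide))
      | (exact absurd (by linear_combination -(hinj hab) : (1 : ZMod 5) = 0) (by decide))
      | (exact absurd (by linear_combination hinj hab : (2 : ZMod 5) = 0) (by decide))
      | (exact absurd (by linear_combination -(hinj hab) : (2 : ZMod 5) = 0) (by decide))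
  have key : ∀ a b, G.Adj (f a) (f b) ↔ S122.Adj a b := by
    intro a b
    fin_cases a <;> fin_cases b <;>
      simp only [e0, e1, e2, e3, e4, e5, S122_adj,
        hC, hva, hvaS, hwa, hwaS, hza, hzaS,
        hvw, hvz, hwz, hwv, hzv, hzw, SimpleGraph.irrefl,
        sub_eq_add_neg, add_assoc, add_right_inj, left_eq_add, add_eq_left] <;>
      decide
  exact hS.false ⟨⟨f, hfinj⟩, key _ _⟩
end
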